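/- arXiv:1804.08498 — 2 statements merged into one kernel-verified Lean document; each statement's English description precedes it below -/
import Mathlib

section
/- Let {W, W̃, Z} be an LTONP data set with Pick operator Λ = WW* − W̃W̃* strictly positive, and set B = W E_𝒴, B̃ = W̃ E_𝒰, R∘ = (I_𝒰 + B̃*Λ⁻¹B̃)^{-1/2}. Define, for λ in the open unit disc, Υ₁₂(λ) = B*(I − λZ*)⁻¹ Λ⁻¹ B̃ R∘, Υ₂₂(λ) = R∘ + B̃*(I − λZ*)⁻¹ Λ⁻¹ B̃ R∘, and the central solution F∘(λ) = B*(Λ + B̃B̃*)⁻¹ (I − λ ΛZ*(Λ + B̃B̃*)⁻¹)⁻¹ B̃. Then for every λ in the open unit disc, Υ₂₂(λ) is invertible, I − λ ΛZ*(Λ + B̃B̃*)⁻¹ is invertible, and F∘(λ) = Υ₁₂(λ) Υ₂₂(λ)⁻¹. -/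
/- Statement 11 (Quotient formula for the central solution): Let {W, W̃, Z} be an
LTONP data set with strictly positive Pick operator Λ, B = W E_𝒴, B̃ = W̃ E_𝒰 and
R∘ = (I + B̃*Λ⁻¹B̃)^{-1/2}.  With Υ₁₂(λ) = B*(I − λZ*)⁻¹Λ⁻¹B̃R∘,
Υ₂₂(λ) = R∘ + B̃*(I − λZ*)⁻¹Λ⁻¹B̃R∘ and the central solution
F∘(λ) = B*(Λ + B̃B̃*)⁻¹(I − λΛZ*(Λ + B̃B̃*)⁻¹)⁻¹B̃, we have, for every λ in the open
unit disc: Υ₂₂(λ) is invertible, I − λΛZ*(Λ + B̃B̃*)⁻¹ is invertible, and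
F∘(λ) = Υ₁₂(λ)Υ₂₂(λ)⁻¹. -/

open ContinuousLinearMap Filter Topology

noncomputable section

local notation "ℓ²(" X ")" => lp (fun _ : ℕ => X) 2

/-- A bounded operator on a Hilbert space is strictly positive if it is positive
(self-adjoint with non-negative quadratic form) and invertible. -/
def IsStrictlyPositiveOp {H : Type*} [NormedAddCommGroup H] [InnerProductSpace ℂ H]
    [CompleteSpace H] (T : H →L[ℂ] H) : Prop :=
  T.IsPositive ∧ IsUnit T

set_option linter.unusedSectionVars false
set_option maxHeartbeats 2000000

section MyAux
open scoped ENNReal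
local notation "⟪" x ", " y "⟫" => @inner ℂ _ _ x y


theorem my_isUnit_of_left_right {M : Type*} [Monoid M] {a x y : M}
    (hx : x * a = 1) (hy : a * y = 1) : IsUnit a := by
  have hxy : x = y := by
    calc x = x * (a * y) := by rw [hy, mul_one]
    _ = (x * a) * y := by rw [mul_assoc]
    _ = y := by rw [hx, one_mul]
  exact ⟨⟨a, y, hy, by rw [← hxy]; exact hx⟩, rfl⟩

theorem my_isUnit_of_sq {M : Type*} [Monoid M] {a : M} (h : IsUnit (a * a)) : IsUnit a := by
  obtain ⟨u, hu⟩ := h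
  refine my_isUnit_of_left_right (x := ↑u⁻¹ * a) (y := a * ↑u⁻¹) ?_ ?_
  · rw [mul_assoc, ← hu, Units.inv_mul]
  · rw [← mul_assoc, ← hu, Units.mul_inv]

theorem my_ringInverse_eq {R : Type*} [Ring R] {a b : R} (h : IsUnit a) (hab : a * b = 1) :
    Ring.inverse a = b := by
  calc Ring.inverse a = Ring.inverse a * (a * b) := by rw [hab, mul_one]
  _ = (Ring.inverse a * a) * b := by rw [mul_assoc]
  _ = b := by rw [Ring.inverse_mul_cancel _ h, one_mul]

theorem my_star_ringInverse {R : Type*} [Ring R] [StarRing R] {a : R} (h : IsUnit a)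
    (hsa : IsSelfAdjoint a) : star (Ring.inverse a) = Ring.inverse a := by
  have h2 : a * star (Ring.inverse a) = 1 := by
    have h3 := congrArg star (Ring.inverse_mul_cancel a h)
    rw [star_mul, star_one, hsa.star_eq] at h3
    exact h3
  exact (my_ringInverse_eq h h2).symm

section Abstract
variable {A : Type*} [CStarAlgebra A] [PartialOrder A] [StarOrderedRing A]

theorem my_one_add_nonneg_isUnit {a : A} (ha : 0 ≤ a) : IsUnit (1 + a) := by
  have h1 : (-1 : ℝ) ∉ spectrum ℝ a := by
    intro h
    have := spectrum_nonneg_of_nonneg ha h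
    linarith
  rw [spectrum.notMem_iff] at h1
  have : algebraMap ℝ A (-1) - a = -(1 + a) := by
    simp [Algebra.algebraMap_eq_smul_one]; abel
  rw [this] at h1
  simpa using h1.neg

theorem my_inv_nonneg {a : A} (h : IsUnit a) (ha : 0 ≤ a) : 0 ≤ Ring.inverse a := by
  have hsa : IsSelfAdjoint a := .of_nonneg ha
  have hss := my_star_ringInverse h hsa
  have this1 : Ring.inverse a = star (Ring.inverse a) * a * Ring.inverse a := by
    rw [hss, mul_assoc, Ring.mul_inverse_cancel _ h, mul_one]
  have h3 : (0:A) ≤ star (Ring.inverse a) * a * Ring.inverse a := star_left_conjugate_nonneg ha _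
  rwa [← this1] at h3

/-- square root package for a nonneg unit -/
theorem my_sqrt_exists {q : A} (hq : 0 ≤ q) (hqu : IsUnit q) :
    ∃ s t : A, 0 ≤ s ∧ star s = s ∧ s * s = q ∧ s * t = 1 ∧ t * s = 1 ∧ star t = t := by
  set s := CFC.sqrt q with hs
  have hs0 : 0 ≤ s := CFC.sqrt_nonneg q
  have hss : s * s = q := CFC.sqrt_mul_sqrt_self q hq
  have hsu : IsUnit s := my_isUnit_of_sq (hss ▸ hqu)
  obtain ⟨u, hu⟩ := hsu
  refine ⟨s, ↑u⁻¹, hs0, (IsSelfAdjoint.of_nonneg hs0).star_eq, hss, ?_, ?_, ?_⟩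
  · rw [← hu]; exact u.mul_inv
  · rw [← hu]; exact u.inv_mul
  · have h1 : s * star (↑u⁻¹ : A) = 1 := by
      have := congrArg star u.inv_mul
      rw [star_mul, star_one, hu, (IsSelfAdjoint.of_nonneg hs0).star_eq] at this
      exact this
    have h2 : (↑u⁻¹ : A) = star ↑u⁻¹ := by
      calc (↑u⁻¹ : A) = ↑u⁻¹ * (s * star ↑u⁻¹) := by rw [h1, mul_one]
      _ = (↑u⁻¹ * s) * star ↑u⁻¹ := by rw [mul_assoc]
      _ = star ↑u⁻¹ := by rw [← hu, u.inv_mul, one_mul]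
    exact h2.symm

theorem my_sq_le_self {c : A} (hc0 : 0 ≤ c) (hc1 : c ≤ 1) : c * c ≤ c := by
  obtain ⟨r, hr0, hrr⟩ : ∃ r : A, 0 ≤ r ∧ r * r = c :=
    ⟨CFC.sqrt c, CFC.sqrt_nonneg c, CFC.sqrt_mul_sqrt_self c hc0⟩
  have hrsa : star r = r := (IsSelfAdjoint.of_nonneg hr0).star_eq
  have h1 : star r * c * r ≤ star r * 1 * r := star_left_conjugate_le_conjugate hc1 r
  have h2 : star r * c * r = c * c := by
    rw [hrsa, ← hrr]; noncomm_ring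
  have h3 : star r * 1 * r = c := by rw [hrsa, mul_one, hrr]
  rwa [h2, h3] at h1

theorem my_key_unit {a q : A} (hq : 0 ≤ q) (hqu : IsUnit q) (h : a * q * star a ≤ q)
    (z : ℂ) (hz : ‖z‖ < 1) : IsUnit (1 - z • star a) := by
  rcases subsingleton_or_nontrivial A with hA | hA
  · exact ⟨⟨_, 1, Subsingleton.elim _ _, Subsingleton.elim _ _⟩, rfl⟩
  obtain ⟨s, t, hs0, hssa, hss, hst, hts, htsa⟩ := my_sqrt_exists hq hqu
  set g := t * a * s with hg
  have hgstar : star g = s * star a * t := by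
    rw [hg, star_mul, star_mul, hssa, htsa, mul_assoc]
  have htqt : t * q * t = 1 := by
    rw [← hss]
    calc t * (s * s) * t = (t * s) * (s * t) := by rw [mul_assoc, mul_assoc, mul_assoc]
    _ = 1 := by rw [hts, hst, one_mul]
  have h2 : g * star g = t * (a * q * star a) * t := by
    rw [hg, hgstar, ← hss]
    calc t * a * s * (s * star a * t) = t * (a * ((s * s) * star a)) * t := by
          simp only [mul_assoc]
    _ = t * (a * (s * s) * star a) * t := by simp only [mul_assoc]
  have h1 : g * star g ≤ 1 := by
    have h3 := star_left_conjugate_le_conjugate h t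
    rw [htsa] at h3
    rw [h2]
    exact h3.trans (le_of_eq htqt)
  have hnn : (0:A) ≤ g * star g := mul_star_self_nonneg g
  have hgnorm : ‖g‖ ≤ 1 := by
    have h5 : ‖g * star g‖ ≤ ‖(1:A)‖ := CStarAlgebra.norm_le_norm_of_nonneg_of_le hnn h1
    rw [norm_one] at h5
    have h6 : ‖g * star g‖ = ‖g‖ * ‖g‖ := CStarRing.norm_self_mul_star
    nlinarith [norm_nonneg g]
  have key : IsUnit (1 - z • star g) := by
    have hlt : ‖z • star g‖ < 1 := by
      rw [norm_smul, norm_star]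
      calc ‖z‖ * ‖g‖ ≤ ‖z‖ * 1 := by
            exact mul_le_mul_of_nonneg_left hgnorm (norm_nonneg z)
      _ < 1 := by rwa [mul_one]
    exact ⟨Units.oneSub _ hlt, (Units.val_oneSub _ hlt)⟩
  have ha : a = s * g * t := by
    rw [hg]
    calc a = (s * t) * a * (s * t) := by rw [hst, one_mul, mul_one]
    _ = s * (t * a * s) * t := by simp only [mul_assoc]
  have hdecomp : 1 - z • star a = t * (1 - z • star g) * s := by
    have hstara : star a = t * star g * s := by
      rw [ha, star_mul, star_mul, hssa, htsa, mul_assoc]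
    have hexp : t * (1 - z • star g) * s = t * s - t * (z • star g) * s := by noncomm_ring
    rw [hstara, hexp, hts, mul_smul_comm, smul_mul_assoc]
  rw [hdecomp]
  have hsu : IsUnit s := my_isUnit_of_left_right hts hst
  have htu : IsUnit t := my_isUnit_of_left_right hst hts
  exact (htu.mul key).mul hsu

theorem my_le_conj_inv {x y : A} (hx : 0 ≤ x) (hxy : x ≤ y) (hyu : IsUnit y) :
    x * Ring.inverse y * x ≤ x := by
  have hy0 : 0 ≤ y := hx.trans hxy
  obtain ⟨s, t, hs0, hssa, hss, hst, hts, htsa⟩ := my_sqrt_exists hy0 hyu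
  set c := t * x * t with hc
  have hc0 : 0 ≤ c := by
    have := star_left_conjugate_nonneg hx t
    rwa [htsa] at this
  have hc1 : c ≤ 1 := by
    have h3 := star_left_conjugate_le_conjugate hxy t
    rw [htsa] at h3
    have htyt : t * y * t = 1 := by
      rw [← hss]
      calc t * (s * s) * t = (t * s) * (s * t) := by rw [mul_assoc, mul_assoc, mul_assoc]
      _ = 1 := by rw [hts, hst, one_mul]
    exact hc ▸ (h3.trans (le_of_eq htyt))
  have hcc : c * c ≤ c := my_sq_le_self hc0 hc1
  have hinv : Ring.inverse y = t * t := by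
    refine my_ringInverse_eq hyu ?_
    rw [← hss]
    calc s * s * (t * t) = s * ((s * t) * t) := by rw [mul_assoc, ← mul_assoc s t t]
    _ = 1 := by rw [hst, one_mul, hst]
  have hxc : x = s * c * s := by
    rw [hc]
    calc x = (s * t) * x * (t * s) := by rw [hst, hts, one_mul, mul_one]
    _ = s * (t * x * t) * s := by simp only [mul_assoc]
  have hmain : x * Ring.inverse y * x = s * (c * c) * s := by
    rw [hinv, hxc]
    calc s * c * s * (t * t) * (s * c * s)
        = s * (c * ((s * t) * ((t * s) * c))) * s := by simp only [mul_assoc]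
    _ = s * (c * c) * s := by rw [hst, hts, one_mul, one_mul, mul_assoc]
  have hfin : s * (c * c) * s ≤ s * c * s := by
    have := star_left_conjugate_le_conjugate hcc s
    rwa [hssa, mul_assoc, ← mul_assoc] at this
  rw [hmain]
  exact hfin.trans (le_of_eq hxc.symm)

theorem my_isUnit_add_of_nonneg {a b : A} (ha0 : 0 ≤ a) (hau : IsUnit a) (hb : 0 ≤ b) :
    IsUnit (a + b) := by
  obtain ⟨s, t, hs0, hssa, hss, hst, hts, htsa⟩ := my_sqrt_exists ha0 hau
  have hmid : IsUnit (1 + t * b * t) := by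
    refine my_one_add_nonneg_isUnit ?_
    have := star_left_conjugate_nonneg hb t
    rwa [htsa] at this
  have hdecomp : a + b = s * (1 + t * b * t) * s := by
    rw [mul_add, add_mul, mul_one, hss]
    congr 1
    calc b = (s * t) * b * (t * s) := by rw [hst, hts, one_mul, mul_one]
    _ = s * (t * b * t) * s := by simp only [mul_assoc]
  rw [hdecomp]
  have hsu : IsUnit s := my_isUnit_of_left_right hts hst
  exact (hsu.mul hmid).mul hsu

end Abstract

theorem my_isUnit_ringInverse {R : Type*} [Ring R] {a : R} (h : IsUnit a) :
    IsUnit (Ring.inverse a) := by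
  refine my_isUnit_of_left_right (x := a) (y := a) ?_ ?_
  · exact Ring.mul_inverse_cancel _ h
  · exact Ring.inverse_mul_cancel _ h


theorem my_isUnit_of_left_right' {M : Type*} [Monoid M] {a x y : M}
    (hx : x * a = 1) (hy : a * y = 1) : IsUnit a := by
  have hxy : x = y := by
    calc x = x * (a * y) := by rw [hy, mul_one]
    _ = (x * a) * y := by rw [mul_assoc]
    _ = y := by rw [hx, one_mul]
  exact ⟨⟨a, y, hy, by rw [← hxy]; exact hx⟩, rfl⟩

section swap
variable {E F : Type*} [NormedAddCommGroup E] [NormedSpace ℂ E]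
    [NormedAddCommGroup F] [NormedSpace ℂ F]

theorem my_one_comp (f : E →L[ℂ] F) : (1 : F →L[ℂ] F).comp f = f := by
  rw [ContinuousLinearMap.one_def, ContinuousLinearMap.id_comp]

theorem my_comp_one (f : E →L[ℂ] F) : f.comp (1 : E →L[ℂ] E) = f := by
  rw [ContinuousLinearMap.one_def, ContinuousLinearMap.comp_id]

variable (x : E →L[ℂ] F) (y : F →L[ℂ] E)

theorem my_swap_core (h : IsUnit (1 + x.comp y)) :
    (1 - y.comp ((Ring.inverse (1 + x.comp y)).comp x)).comp (1 + y.comp x) = 1 ∧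
    (1 + y.comp x).comp (1 - y.comp ((Ring.inverse (1 + x.comp y)).comp x)) = 1 := by
  set i := Ring.inverse (1 + x.comp y) with hi
  have h1 : (1 + x.comp y).comp i = 1 := Ring.mul_inverse_cancel _ h
  have h2 : i.comp (1 + x.comp y) = 1 := Ring.inverse_mul_cancel _ h
  have key2 : i.comp (x.comp y) = 1 - i := by
    rw [comp_add, my_comp_one] at h2
    rw [← h2]; abel
  have key1 : (x.comp y).comp i = 1 - i := by
    rw [add_comp, my_one_comp] at h1
    rw [← h1]; abel
  constructor
  · simp only [sub_comp, comp_add, add_comp, comp_sub, my_comp_one, my_one_comp,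
      ContinuousLinearMap.comp_assoc]
    have haux : i.comp (x.comp (y.comp x)) = x - i.comp x := by
      rw [← ContinuousLinearMap.comp_assoc x y x, ← ContinuousLinearMap.comp_assoc i (x.comp y) x,
        key2, sub_comp, my_one_comp]
    rw [haux, comp_sub]
    abel
  · simp only [sub_comp, comp_add, add_comp, comp_sub, my_comp_one, my_one_comp,
      ContinuousLinearMap.comp_assoc]
    have haux : x.comp (y.comp (i.comp x)) = x - i.comp x := by
      rw [← ContinuousLinearMap.comp_assoc x y (i.comp x),
        ← ContinuousLinearMap.comp_assoc (x.comp y) i x, key1, sub_comp, my_one_comp]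
    rw [haux, comp_sub]
    abel

theorem my_swap_isUnit (h : IsUnit (1 + x.comp y)) : IsUnit (1 + y.comp x) := by
  obtain ⟨hl, hr⟩ := my_swap_core x y h
  exact my_isUnit_of_left_right' (x := 1 - y.comp ((Ring.inverse (1 + x.comp y)).comp x))
    (y := 1 - y.comp ((Ring.inverse (1 + x.comp y)).comp x)) hl hr

theorem my_pushthrough (h : IsUnit (1 + x.comp y)) :
    (Ring.inverse (1 + x.comp y)).comp x = x.comp (Ring.inverse (1 + y.comp x)) := by
  have h' : IsUnit (1 + y.comp x) := my_swap_isUnit x y h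
  have hc1 : (1 + y.comp x).comp (Ring.inverse (1 + y.comp x)) = 1 :=
    Ring.mul_inverse_cancel _ h'
  have hc2 : (Ring.inverse (1 + x.comp y)).comp (1 + x.comp y) = 1 :=
    Ring.inverse_mul_cancel _ h
  have e1 : (1 + x.comp y).comp x = x.comp (1 + y.comp x) := by
    simp only [add_comp, comp_add, my_comp_one, my_one_comp, ContinuousLinearMap.comp_assoc]
  calc (Ring.inverse (1 + x.comp y)).comp x
      = (Ring.inverse (1 + x.comp y)).comp ((x.comp (1 + y.comp x)).comp
          (Ring.inverse (1 + y.comp x))) := by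
        rw [ContinuousLinearMap.comp_assoc, hc1, my_comp_one]
  _ = ((Ring.inverse (1 + x.comp y)).comp (1 + x.comp y)).comp
        (x.comp (Ring.inverse (1 + y.comp x))) := by
        rw [← e1]
        simp only [ContinuousLinearMap.comp_assoc]
  _ = x.comp (Ring.inverse (1 + y.comp x)) := by
        rw [hc2, my_one_comp]
end swap


theorem my_apply_inner {E F : Type*} [NormedAddCommGroup E] [InnerProductSpace ℂ E]
    [CompleteSpace E] [NormedAddCommGroup F] [InnerProductSpace ℂ F] [CompleteSpace F]
    (A : E →L[ℂ] F) (y : E) (x : F) : ⟪A y, x⟫ = ⟪y, adjoint A x⟫ := by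
  rw [← adjoint_adjoint A]
  rw [adjoint_inner_left]
  rw [adjoint_adjoint]

variable {H : Type*} [NormedAddCommGroup H] [InnerProductSpace ℂ H] [CompleteSpace H]

theorem my_shift_mem (u : ℓ²(H)) : Memℓp (fun n => u (n + 1)) (2 : ℝ≥0∞) := by
  apply memℓp_gen
  have h := (lp.memℓp u).summable (by norm_num : 0 < (2:ℝ≥0∞).toReal)
  exact h.comp_injective (add_left_injective 1)

theorem my_shift_adjoint_eq (S : ℓ²(H) →L[ℂ] ℓ²(H))
    (hS0 : ∀ x : ℓ²(H), S x 0 = 0) (hS1 : ∀ (x : ℓ²(H)) (n : ℕ), S x (n + 1) = x n)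
    (u : ℓ²(H)) : adjoint S u = ⟨fun n => u (n + 1), my_shift_mem u⟩ := by
  apply ext_inner_left ℂ
  intro w
  rw [adjoint_inner_right, lp.inner_eq_tsum, lp.inner_eq_tsum]
  have hsum : Summable fun n => ⟪S w n, u n⟫ := lp.summable_inner _ _
  rw [hsum.tsum_eq_zero_add]
  simp only [hS0, inner_zero_left, zero_add, hS1]

theorem my_shift_adjoint_inner (S : ℓ²(H) →L[ℂ] ℓ²(H))
    (hS0 : ∀ x : ℓ²(H), S x 0 = 0) (hS1 : ∀ (x : ℓ²(H)) (n : ℕ), S x (n + 1) = x n)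
    (u : ℓ²(H)) : ⟪adjoint S u, adjoint S u⟫ + ⟪u 0, u 0⟫ = ⟪u, u⟫ := by
  rw [my_shift_adjoint_eq S hS0 hS1 u]
  rw [lp.inner_eq_tsum, lp.inner_eq_tsum]
  have hsum : Summable fun n => ⟪u n, u n⟫ := lp.summable_inner _ _
  rw [hsum.tsum_eq_zero_add]
  have : ∀ n : ℕ, ⟪(⟨fun n => u (n + 1), my_shift_mem u⟩ : ℓ²(H)) n,
      (⟨fun n => u (n + 1), my_shift_mem u⟩ : ℓ²(H)) n⟫ = ⟪u (n+1), u (n+1)⟫ := fun n => rfl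
  rw [tsum_congr this]
  ring

theorem my_embed_adjoint (E : H →L[ℂ] ℓ²(H))
    (hE0 : ∀ y : H, E y 0 = y) (hE1 : ∀ (y : H) (n : ℕ), E y (n + 1) = 0)
    (u : ℓ²(H)) : adjoint E u = u 0 := by
  apply ext_inner_left ℂ
  intro w
  rw [adjoint_inner_right, lp.inner_eq_tsum]
  have hsum : Summable fun n => ⟪E w n, u n⟫ := lp.summable_inner _ _
  rw [hsum.tsum_eq_zero_add]
  simp only [hE0, hE1, inner_zero_left, tsum_zero, add_zero]

variable {𝒵 𝒴 𝒰 : Type*}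
  [NormedAddCommGroup 𝒵] [InnerProductSpace ℂ 𝒵] [CompleteSpace 𝒵]
  [NormedAddCommGroup 𝒴] [InnerProductSpace ℂ 𝒴] [CompleteSpace 𝒴]
  [NormedAddCommGroup 𝒰] [InnerProductSpace ℂ 𝒰] [CompleteSpace 𝒰]

set_option maxHeartbeats 1000000 in
theorem my_contract (S𝒴 : ℓ²(𝒴) →L[ℂ] ℓ²(𝒴))
    (hS𝒴0 : ∀ x : ℓ²(𝒴), S𝒴 x 0 = 0)
    (hS𝒴1 : ∀ (x : ℓ²(𝒴)) (n : ℕ), S𝒴 x (n + 1) = x n)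
    (Z : 𝒵 →L[ℂ] 𝒵) (W : ℓ²(𝒴) →L[ℂ] 𝒵) (hW : Z.comp W = W.comp S𝒴) :
    Z.comp ((W.comp (adjoint W)).comp (adjoint Z)) ≤ W.comp (adjoint W) := by
  rw [ContinuousLinearMap.le_def, ContinuousLinearMap.isPositive_def']
  constructor
  · rw [IsSelfAdjoint, star_eq_adjoint]
    simp only [map_sub, adjoint_comp, adjoint_adjoint, ContinuousLinearMap.comp_assoc]
  · intro x
    rw [reApplyInnerSelf_apply]
    have hWa : (adjoint W).comp (adjoint Z) = (adjoint S𝒴).comp (adjoint W) := by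
      rw [← adjoint_comp, ← adjoint_comp, hW]
    have hWax : adjoint W (adjoint Z x) = adjoint S𝒴 (adjoint W x) := by
      have := congrArg (fun T => T x) hWa
      simpa using this
    have e1 : ⟪(W.comp (adjoint W)) x, x⟫ = ⟪adjoint W x, adjoint W x⟫ := by
      rw [comp_apply, my_apply_inner]
    have e2 : ⟪(Z.comp ((W.comp (adjoint W)).comp (adjoint Z))) x, x⟫
        = ⟪adjoint S𝒴 (adjoint W x), adjoint S𝒴 (adjoint W x)⟫ := by
      rw [comp_apply, my_apply_inner, comp_apply, comp_apply, my_apply_inner, hWax]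
    rw [sub_apply, inner_sub_left, map_sub, e1, e2]
    have e3 := my_shift_adjoint_inner S𝒴 hS𝒴0 hS𝒴1 (adjoint W x)
    have e4 : ⟪adjoint S𝒴 (adjoint W x), adjoint S𝒴 (adjoint W x)⟫
        = ⟪adjoint W x, adjoint W x⟫ - ⟪(adjoint W x) 0, (adjoint W x) 0⟫ := by
      rw [← e3]; ring
    rw [e4, map_sub]
    have h5 : (0:ℝ) ≤ RCLike.re ⟪(adjoint W x) 0, (adjoint W x) 0⟫ := inner_self_nonneg (𝕜 := ℂ) (x := (adjoint W x) 0)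
    linarith

set_option maxHeartbeats 1000000 in
theorem my_stein (S𝒴 : ℓ²(𝒴) →L[ℂ] ℓ²(𝒴)) (S𝒰 : ℓ²(𝒰) →L[ℂ] ℓ²(𝒰))
    (hS𝒴0 : ∀ x : ℓ²(𝒴), S𝒴 x 0 = 0)
    (hS𝒴1 : ∀ (x : ℓ²(𝒴)) (n : ℕ), S𝒴 x (n + 1) = x n)
    (hS𝒰0 : ∀ x : ℓ²(𝒰), S𝒰 x 0 = 0)
    (hS𝒰1 : ∀ (x : ℓ²(𝒰)) (n : ℕ), S𝒰 x (n + 1) = x n)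
    (E𝒰 : 𝒰 →L[ℂ] ℓ²(𝒰))
    (hE𝒰0 : ∀ u : 𝒰, E𝒰 u 0 = u) (hE𝒰1 : ∀ (u : 𝒰) (n : ℕ), E𝒰 u (n + 1) = 0)
    (Z : 𝒵 →L[ℂ] 𝒵) (W : ℓ²(𝒴) →L[ℂ] 𝒵) (Wt : ℓ²(𝒰) →L[ℂ] 𝒵)
    (hW : Z.comp W = W.comp S𝒴) (hWt : Z.comp Wt = Wt.comp S𝒰) :
    Z.comp ((W.comp (adjoint W) - Wt.comp (adjoint Wt)).comp (adjoint Z)) ≤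
      (W.comp (adjoint W) - Wt.comp (adjoint Wt)) +
        (Wt.comp E𝒰).comp (adjoint (Wt.comp E𝒰)) := by
  rw [ContinuousLinearMap.le_def, ContinuousLinearMap.isPositive_def']
  constructor
  · rw [IsSelfAdjoint, star_eq_adjoint]
    simp only [map_sub, map_add, adjoint_comp, adjoint_adjoint, ContinuousLinearMap.comp_assoc]
  · intro x
    rw [reApplyInnerSelf_apply]
    set u := adjoint W x with hu
    set w := adjoint Wt x with hw
    have hWa : adjoint W (adjoint Z x) = adjoint S𝒴 u := by
      have h := congrArg (fun T => ContinuousLinearMap.adjoint T x) hW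
      simpa [adjoint_comp] using h
    have hWta : adjoint Wt (adjoint Z x) = adjoint S𝒰 w := by
      have h := congrArg (fun T => ContinuousLinearMap.adjoint T x) hWt
      simpa [adjoint_comp] using h
    have e1 : ⟪(W.comp (adjoint W)) x, x⟫ = ⟪u, u⟫ := by
      rw [comp_apply, my_apply_inner]
    have e1' : ⟪(Wt.comp (adjoint Wt)) x, x⟫ = ⟪w, w⟫ := by
      rw [comp_apply, my_apply_inner]
    have e2 : ⟪(Z.comp ((W.comp (adjoint W) - Wt.comp (adjoint Wt)).comp (adjoint Z))) x, x⟫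
        = ⟪adjoint S𝒴 u, adjoint S𝒴 u⟫ - ⟪adjoint S𝒰 w, adjoint S𝒰 w⟫ := by
      simp only [comp_apply, sub_apply, inner_sub_left, my_apply_inner Z, my_apply_inner W,
        my_apply_inner Wt]
      rw [hWa, hWta]
    have e3 : ⟪((Wt.comp E𝒰).comp (adjoint (Wt.comp E𝒰))) x, x⟫ = ⟪w 0, w 0⟫ := by
      rw [comp_apply, my_apply_inner]
      have : adjoint (Wt.comp E𝒰) x = w 0 := by
        rw [adjoint_comp, comp_apply, ← hw, my_embed_adjoint E𝒰 hE𝒰0 hE𝒰1]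
      rw [this]
    have f1 := my_shift_adjoint_inner S𝒴 hS𝒴0 hS𝒴1 u
    have f2 := my_shift_adjoint_inner S𝒰 hS𝒰0 hS𝒰1 w
    rw [sub_apply, inner_sub_left, add_apply, inner_add_left, sub_apply, inner_sub_left]
    rw [e1, e1', e3]
    have e2' : ⟪(Z.comp ((W.comp (adjoint W) - Wt.comp (adjoint Wt)).comp (adjoint Z))) x, x⟫
        = (⟪u, u⟫ - ⟪u 0, u 0⟫) - (⟪w, w⟫ - ⟪w 0, w 0⟫) := by
      rw [e2, ← f1, ← f2]; ring
    rw [e2']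
    have h5 : (0:ℝ) ≤ RCLike.re ⟪u 0, u 0⟫ := inner_self_nonneg (𝕜 := ℂ) (x := u 0)
    have : (⟪u, u⟫ - ⟪w, w⟫ + ⟪w 0, w 0⟫) - ((⟪u, u⟫ - ⟪u 0, u 0⟫) - (⟪w, w⟫ - ⟪w 0, w 0⟫))
        = ⟪u 0, u 0⟫ := by ring
    rw [this]
    exact h5

end MyAux

variable {𝒵 𝒴 𝒰 : Type*}
  [NormedAddCommGroup 𝒵] [InnerProductSpace ℂ 𝒵] [CompleteSpace 𝒵]
  [NormedAddCommGroup 𝒴] [InnerProductSpace ℂ 𝒴] [CompleteSpace 𝒴]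
  [NormedAddCommGroup 𝒰] [InnerProductSpace ℂ 𝒰] [CompleteSpace 𝒰]

theorem central_solution_quotient_formula
    -- the unilateral forward shifts and the embeddings onto the zeroth coordinate
    (S𝒴 : ℓ²(𝒴) →L[ℂ] ℓ²(𝒴)) (S𝒰 : ℓ²(𝒰) →L[ℂ] ℓ²(𝒰))
    (hS𝒴0 : ∀ x : ℓ²(𝒴), S𝒴 x 0 = 0)
    (hS𝒴1 : ∀ (x : ℓ²(𝒴)) (n : ℕ), S𝒴 x (n + 1) = x n)
    (hS𝒰0 : ∀ x : ℓ²(𝒰), S𝒰 x 0 = 0)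
    (hS𝒰1 : ∀ (x : ℓ²(𝒰)) (n : ℕ), S𝒰 x (n + 1) = x n)
    (E𝒴 : 𝒴 →L[ℂ] ℓ²(𝒴)) (E𝒰 : 𝒰 →L[ℂ] ℓ²(𝒰))
    (hE𝒴0 : ∀ y : 𝒴, E𝒴 y 0 = y) (hE𝒴1 : ∀ (y : 𝒴) (n : ℕ), E𝒴 y (n + 1) = 0)
    (hE𝒰0 : ∀ u : 𝒰, E𝒰 u 0 = u) (hE𝒰1 : ∀ (u : 𝒰) (n : ℕ), E𝒰 u (n + 1) = 0)
    -- the LTONP data set {W, W̃, Z}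
    (Z : 𝒵 →L[ℂ] 𝒵) (W : ℓ²(𝒴) →L[ℂ] 𝒵) (Wt : ℓ²(𝒰) →L[ℂ] 𝒵)
    (hW : Z.comp W = W.comp S𝒴) (hWt : Z.comp Wt = Wt.comp S𝒰)
    -- Λ, B, B̃
    (Λ : 𝒵 →L[ℂ] 𝒵) (B : 𝒴 →L[ℂ] 𝒵) (Bt : 𝒰 →L[ℂ] 𝒵)
    (hΛ : Λ = W.comp (adjoint W) - Wt.comp (adjoint Wt))
    (hB : B = W.comp E𝒴) (hBt : Bt = Wt.comp E𝒰)
    -- the Pick operator is strictly positive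
    (hpos : IsStrictlyPositiveOp Λ)
    -- R∘ = (I + B̃*Λ⁻¹B̃)^{-1/2}
    (R : 𝒰 →L[ℂ] 𝒰)
    (hR : R.IsPositive ∧
      R.comp R = Ring.inverse (1 + (adjoint Bt).comp ((Ring.inverse Λ).comp Bt)))
    (z : ℂ) (hz : ‖z‖ < 1) :
    IsUnit (1 - z • adjoint Z) ∧
    -- Υ₂₂(z) is invertible
    IsUnit (R + (adjoint Bt).comp ((Ring.inverse (1 - z • adjoint Z)).comp
      ((Ring.inverse Λ).comp (Bt.comp R)))) ∧
    -- I − zΛZ*(Λ + B̃B̃*)⁻¹ is invertible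
    IsUnit (1 - z • (Λ.comp ((adjoint Z).comp
      (Ring.inverse (Λ + Bt.comp (adjoint Bt)))))) ∧
    -- the quotient formula F∘(z) = Υ₁₂(z) Υ₂₂(z)⁻¹
    ((adjoint B).comp ((Ring.inverse (Λ + Bt.comp (adjoint Bt))).comp
        ((Ring.inverse (1 - z • (Λ.comp ((adjoint Z).comp
          (Ring.inverse (Λ + Bt.comp (adjoint Bt))))))).comp Bt))
      = ((adjoint B).comp ((Ring.inverse (1 - z • adjoint Z)).comp
          ((Ring.inverse Λ).comp (Bt.comp R)))).comp
        (Ring.inverse (R + (adjoint Bt).comp ((Ring.inverse (1 - z • adjoint Z)).comp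
          ((Ring.inverse Λ).comp (Bt.comp R)))))) := by
  obtain ⟨hΛpos, hΛu⟩ := hpos
  have hΛsa : IsSelfAdjoint Λ := hΛpos.isSelfAdjoint
  have hΛ0 : (0 : 𝒵 →L[ℂ] 𝒵) ≤ Λ := (ContinuousLinearMap.nonneg_iff_isPositive Λ).mpr hΛpos
  have hbb0 : (0 : 𝒵 →L[ℂ] 𝒵) ≤ Bt.comp (adjoint Bt) := by
    rw [ContinuousLinearMap.nonneg_iff_isPositive]
    have h := (ContinuousLinearMap.isPositive_one (E := 𝒰)).conj_adjoint Bt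
    simpa [my_one_comp] using h
  have hww0 : (0 : 𝒵 →L[ℂ] 𝒵) ≤ Wt.comp (adjoint Wt) := by
    rw [ContinuousLinearMap.nonneg_iff_isPositive]
    have h := ContinuousLinearMap.isPositive_one.conj_adjoint Wt
    simpa [my_one_comp] using h
  have hQeq : Λ + Wt.comp (adjoint Wt) = W.comp (adjoint W) := by rw [hΛ]; abel
  have hQu : IsUnit (W.comp (adjoint W)) := by
    rw [← hQeq]; exact my_isUnit_add_of_nonneg hΛ0 hΛu hww0
  have hQ0 : (0 : 𝒵 →L[ℂ] 𝒵) ≤ W.comp (adjoint W) := by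
    rw [← hQeq]; exact add_nonneg hΛ0 hww0
  have hZQ : Z * (W.comp (adjoint W)) * star Z ≤ W.comp (adjoint W) := by
    have h := my_contract S𝒴 hS𝒴0 hS𝒴1 Z W hW
    simp only [star_eq_adjoint, ContinuousLinearMap.mul_def, ContinuousLinearMap.comp_assoc]
    exact h
  have hG1 : IsUnit (1 - z • adjoint Z) := by
    have h := my_key_unit hQ0 hQu hZQ z hz
    rwa [star_eq_adjoint] at h
  set Δ := Λ + Bt.comp (adjoint Bt) with hΔdef
  set iΔ := Ring.inverse Δ with hiΔdef
  have hΔ0 : (0 : 𝒵 →L[ℂ] 𝒵) ≤ Δ := add_nonneg hΛ0 hbb0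
  have hΔu : IsUnit Δ := my_isUnit_add_of_nonneg hΛ0 hΛu hbb0
  have hΔsa : IsSelfAdjoint Δ := .of_nonneg hΔ0
  have hiΔ0 : (0 : 𝒵 →L[ℂ] 𝒵) ≤ iΔ := my_inv_nonneg hΔu hΔ0
  have hiΔu : IsUnit iΔ := my_isUnit_ringInverse hΔu
  have hiΔsa : star iΔ = iΔ := my_star_ringInverse hΔu hΔsa
  have hiΔΔ : iΔ * Δ = 1 := Ring.inverse_mul_cancel _ hΔu
  have hΔiΔ : Δ * iΔ = 1 := Ring.mul_inverse_cancel _ hΔu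
  have hstein : Z * Λ * star Z ≤ Δ := by
    have h := my_stein S𝒴 S𝒰 hS𝒴0 hS𝒴1 hS𝒰0 hS𝒰1 E𝒰 hE𝒰0 hE𝒰1 Z W Wt hW hWt
    rw [← hΛ, ← hBt] at h
    rw [hΔdef]
    simp only [star_eq_adjoint, ContinuousLinearMap.mul_def, ContinuousLinearMap.comp_assoc]
    exact h
  have hΛΔ : Λ ≤ Δ := by
    rw [ContinuousLinearMap.le_def, hΔdef, add_sub_cancel_left]
    exact (ContinuousLinearMap.nonneg_iff_isPositive _).mp hbb0
  have hconj : Λ * iΔ * Λ ≤ Λ := my_le_conj_inv hΛ0 hΛΔ hΔu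
  have hstar2 : star (iΔ * Z * Λ) = Λ * (star Z * iΔ) := by
    rw [star_mul, star_mul, hΛsa.star_eq, hiΔsa]
  have hineq : (iΔ * Z * Λ) * iΔ * star (iΔ * Z * Λ) ≤ iΔ := by
    rw [hstar2]
    have e1 : (iΔ * Z * Λ) * iΔ * (Λ * (star Z * iΔ))
        = (iΔ * Z) * (Λ * iΔ * Λ) * (star Z * iΔ) := by noncomm_ring
    rw [e1]
    have step1 := star_left_conjugate_le_conjugate hconj (star Z * iΔ)
    rw [star_mul, star_star, hiΔsa] at step1
    refine le_trans step1 ?_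
    have e2 : (iΔ * Z) * Λ * (star Z * iΔ) = iΔ * (Z * Λ * star Z) * iΔ := by noncomm_ring
    rw [e2]
    have step2 := star_left_conjugate_le_conjugate hstein iΔ
    rw [hiΔsa] at step2
    refine le_trans step2 ?_
    have e3 : iΔ * Δ * iΔ = iΔ := by rw [hiΔΔ, one_mul]
    exact le_of_eq e3
  have hT : IsUnit (1 - z • (Λ.comp ((adjoint Z).comp iΔ))) := by
    have h := my_key_unit hiΔ0 hiΔu hineq z hz
    rw [hstar2] at h
    simp only [star_eq_adjoint, ContinuousLinearMap.mul_def] at h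
    exact h
  have hiΛ0 : (0 : 𝒵 →L[ℂ] 𝒵) ≤ Ring.inverse Λ := my_inv_nonneg hΛu hΛ0
  have hppos : (0 : 𝒰 →L[ℂ] 𝒰) ≤ (adjoint Bt).comp ((Ring.inverse Λ).comp Bt) := by
    rw [ContinuousLinearMap.nonneg_iff_isPositive]
    have h := ((ContinuousLinearMap.nonneg_iff_isPositive _).mp hiΛ0).adjoint_conj Bt
    simpa [ContinuousLinearMap.comp_assoc] using h
  have hXu : IsUnit (1 + (adjoint Bt).comp ((Ring.inverse Λ).comp Bt)) :=
    my_one_add_nonneg_isUnit hppos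
  have hRu : IsUnit R := by
    apply my_isUnit_of_sq
    rw [show R * R = R.comp R from rfl, hR.2]
    exact my_isUnit_ringInverse hXu
  -- abbreviations
  set Zs := adjoint Z with hZsdef
  set A0 := (1 : 𝒵 →L[ℂ] 𝒵) - z • Zs with hA0def
  set iA := Ring.inverse A0 with hiAdef
  set iΛ := Ring.inverse Λ with hiΛdef
  set T := Λ.comp (Zs.comp iΔ) with hTdef
  set y0 := adjoint Bt with hy0def
  set x0 := iA.comp (iΛ.comp Bt) with hx0def
  set iT1 := Ring.inverse ((1 : 𝒵 →L[ℂ] 𝒵) - z • T) with hiT1def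
  set M := A0 + iΛ * (Bt.comp y0) with hMdef
  have hiΛΛ : iΛ * Λ = 1 := Ring.inverse_mul_cancel _ hΛu
  have hΛiΛ : Λ * iΛ = 1 := Ring.mul_inverse_cancel _ hΛu
  have hA0iA : A0 * iA = 1 := Ring.mul_inverse_cancel _ hG1
  have hiAA0 : iA * A0 = 1 := Ring.inverse_mul_cancel _ hG1
  have hiΛu : IsUnit iΛ := my_isUnit_ringInverse hΛu
  have hiAu : IsUnit iA := my_isUnit_ringInverse hG1
  -- the factorization 1 - zT = Λ M Δ⁻¹
  have hTΔ : (1 - z • T) * Δ = Δ - z • (Λ * Zs) := by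
    rw [sub_mul, one_mul, smul_mul_assoc]
    congr 1
    congr 1
    rw [hTdef]
    calc (Λ.comp (Zs.comp iΔ)) * Δ = Λ * (Zs * (iΔ * Δ)) := by
          rw [show (Λ.comp (Zs.comp iΔ)) = Λ * (Zs * iΔ) from rfl]; noncomm_ring
    _ = Λ * Zs := by rw [hiΔΔ, mul_one]
  have hMfact : iΛ * (1 - z • T) * Δ = M := by
    calc iΛ * (1 - z • T) * Δ = iΛ * ((1 - z • T) * Δ) := by rw [mul_assoc]
    _ = iΛ * (Δ - z • (Λ * Zs)) := by rw [hTΔ]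
    _ = iΛ * Δ - z • (iΛ * Λ * Zs) := by rw [mul_sub, mul_smul_comm, ← mul_assoc]
    _ = (1 + iΛ * (Bt.comp y0)) - z • Zs := by
        rw [hΔdef, mul_add, hiΛΛ, one_mul]
    _ = M := by rw [hMdef, hA0def]; abel
  have hMu : IsUnit M := by
    rw [← hMfact]
    exact ((hiΛu.mul hT).mul hΔu)
  have hx0y0 : x0.comp y0 = iA * (iΛ * (Bt.comp y0)) := by
    rw [hx0def]
    simp only [ContinuousLinearMap.comp_assoc]
    rfl
  have hPfact : A0 * (1 + x0.comp y0) = M := by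
    rw [hx0y0, mul_add, mul_one, ← mul_assoc, hA0iA, one_mul, hMdef]
  have hPu : IsUnit (1 + x0.comp y0) := by
    have h : iA * M = 1 + x0.comp y0 := by rw [← hPfact, ← mul_assoc, hiAA0, one_mul]
    rw [← h]; exact hiAu.mul hMu
  have hP'u : IsUnit (1 + y0.comp x0) := my_swap_isUnit x0 y0 hPu
  have hU22 : R + y0.comp (iA.comp (iΛ.comp (Bt.comp R))) = (1 + y0.comp x0).comp R := by
    simp only [ContinuousLinearMap.add_comp, my_one_comp, hx0def,
      ContinuousLinearMap.comp_assoc]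
  have hG2 : IsUnit (R + y0.comp (iA.comp (iΛ.comp (Bt.comp R)))) := by
    rw [hU22]; exact hP'u.mul hRu
  set iM := Ring.inverse M with hiMdef
  set iP := Ring.inverse (1 + x0.comp y0) with hiPdef
  set iP' := Ring.inverse (1 + y0.comp x0) with hiP'def
  set iR := Ring.inverse R with hiRdef
  have hiT1 : iT1 = Δ * iM * iΛ := by
    rw [hiT1def]
    refine my_ringInverse_eq hT ?_
    have hL : Λ * M * iΔ = 1 - z • T := by
      rw [← hMfact]
      calc Λ * (iΛ * (1 - z • T) * Δ) * iΔ = (Λ * iΛ) * (1 - z • T) * (Δ * iΔ) := by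
            noncomm_ring
      _ = 1 - z • T := by rw [hΛiΛ, hΔiΔ, one_mul, mul_one]
    rw [← hL]
    calc (Λ * M * iΔ) * (Δ * iM * iΛ) = Λ * (M * ((iΔ * Δ) * iM)) * iΛ := by noncomm_ring
    _ = 1 := by
        rw [hiΔΔ, one_mul, hiMdef, Ring.mul_inverse_cancel _ hMu, mul_one, hΛiΛ]
  have hiM : iM = iP * iA := by
    rw [hiMdef]
    refine my_ringInverse_eq hMu ?_
    rw [← hPfact]
    calc (A0 * (1 + x0.comp y0)) * (iP * iA) = A0 * ((1 + x0.comp y0) * iP) * iA := by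
          noncomm_ring
    _ = 1 := by rw [hiPdef, Ring.mul_inverse_cancel _ hPu, mul_one, hA0iA]
  have hiU : Ring.inverse (R + y0.comp (iA.comp (iΛ.comp (Bt.comp R)))) = iR * iP' := by
    refine my_ringInverse_eq hG2 ?_
    rw [hU22]
    calc ((1 + y0.comp x0) * R) * (iR * iP') = (1 + y0.comp x0) * (R * iR) * iP' := by
          noncomm_ring
    _ = 1 := by
        rw [hiRdef, Ring.mul_inverse_cancel _ hRu, mul_one, hiP'def,
          Ring.mul_inverse_cancel _ hP'u]
  have hcore : iΔ.comp (iT1.comp Bt)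
      = (iA.comp (iΛ.comp (Bt.comp R))).comp
          (Ring.inverse (R + y0.comp (iA.comp (iΛ.comp (Bt.comp R))))) := by
    rw [hiT1, hiM, hiU]
    have h1 : iΔ * (Δ * (iP * iA) * iΛ) = iP * (iA * iΛ) := by
      calc iΔ * (Δ * (iP * iA) * iΛ) = (iΔ * Δ) * (iP * (iA * iΛ)) := by noncomm_ring
      _ = iP * (iA * iΛ) := by rw [hiΔΔ, one_mul]
    have hl : iΔ.comp ((Δ * (iP * iA) * iΛ).comp Bt) = iP.comp x0 := by
      rw [← ContinuousLinearMap.comp_assoc]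
      rw [show iΔ.comp (Δ * (iP * iA) * iΛ) = iP * (iA * iΛ) from h1]
      rw [show (iP * (iA * iΛ)).comp Bt = iP.comp (iA.comp (iΛ.comp Bt)) from by
        simp only [ContinuousLinearMap.mul_def, ContinuousLinearMap.comp_assoc]]
    have hr : (iA.comp (iΛ.comp (Bt.comp R))).comp (iR * iP') = x0.comp iP' := by
      have e : iA.comp (iΛ.comp (Bt.comp R)) = x0.comp R := by
        rw [hx0def]; simp only [ContinuousLinearMap.comp_assoc]
      rw [e, ContinuousLinearMap.comp_assoc]
      congr 1
      rw [show (iR : 𝒰 →L[ℂ] 𝒰) * iP' = iR.comp iP' from rfl,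
        ← ContinuousLinearMap.comp_assoc]
      rw [show R.comp iR = 1 from by rw [hiRdef]; exact Ring.mul_inverse_cancel _ hRu]
      rw [my_one_comp]
    rw [hl, hr]
    rw [show iP = Ring.inverse (1 + x0.comp y0) from hiPdef,
      show iP' = Ring.inverse (1 + y0.comp x0) from hiP'def]
    exact my_pushthrough x0 y0 hPu
  refine ⟨hG1, hG2, hT, ?_⟩
  rw [ContinuousLinearMap.comp_assoc (adjoint B) (iA.comp (iΛ.comp (Bt.comp R)))]
  rw [← hcore]

end
end

section
/- Let H₁, H₂, 𝒵 be complex Hilbert spaces and let W : H₁ → 𝒵 and W̃ : H₂ → 𝒵 be bounded operators such that Λ = WW* − W̃W̃* is strictly positive. Then: (i) P = WW* is strictly positive; (ii) the operator A = W* P⁻¹ W̃ : H₂ → H₁ is a strict contraction, i.e. I − A*A is strictly positive; (iii) (I − A*A)⁻¹ = I + W̃* Λ⁻¹ W̃; and (iv) A (I − A*A)⁻¹ A* = W* Λ⁻¹ W − W* P⁻¹ W. -/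
/- Statement 14: Let W : H₁ → 𝒵 and W̃ : H₂ → 𝒵 be bounded operators with
Λ = WW* − W̃W̃* strictly positive.  Then (i) P = WW* is strictly positive;
(ii) A = W*P⁻¹W̃ is a strict contraction (I − A*A is strictly positive);
(iii) (I − A*A)⁻¹ = I + W̃*Λ⁻¹W̃; and (iv) A(I − A*A)⁻¹A* = W*Λ⁻¹W − W*P⁻¹W. -/

open ContinuousLinearMap

noncomputable section

section AuxLemmas

set_option linter.unusedSectionVars false

variable {E F : Type*}
  [NormedAddCommGroup E] [InnerProductSpace ℂ E] [CompleteSpace E]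
  [NormedAddCommGroup F] [InnerProductSpace ℂ F] [CompleteSpace F]

lemma aux_ring_inverse_eq {R : Type*} [Ring R] {x y : R} (h1 : x * y = 1) (h2 : y * x = 1) :
    Ring.inverse x = y := by
  have hx : IsUnit x := isUnit_iff_exists.mpr ⟨y, h1, h2⟩
  calc Ring.inverse x = (y * x) * Ring.inverse x := by rw [h2, one_mul]
    _ = y * (x * Ring.inverse x) := mul_assoc _ _ _
    _ = y := by rw [Ring.mul_inverse_cancel x hx, mul_one]

lemma aux_isUnit_one_add (T : E →L[ℂ] E) (hT : T.IsPositive) : IsUnit (1 + T) := by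
  apply isUnit_of_forall_le_norm_inner_map (1 + T) (c := 1) one_pos
  intro x
  have h0 : (0:ℝ) ≤ RCLike.re (inner ℂ (T x) x : ℂ) := hT.re_inner_nonneg_left x
  have h1 : RCLike.re (inner ℂ ((1 + T) x) x : ℂ) = ‖x‖ ^ 2 + RCLike.re (inner ℂ (T x) x : ℂ) := by
    simp [inner_add_left, ← @inner_self_eq_norm_sq ℂ]
  have h2 : ‖x‖ ^ 2 * 1 ≤ RCLike.re (inner ℂ ((1 + T) x) x : ℂ) := by
    rw [h1, mul_one]; linarith
  exact h2.trans (RCLike.re_le_norm _)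

lemma aux_swap (a : F →L[ℂ] E) (b : E →L[ℂ] F) (h : IsUnit (1 + b.comp a)) :
    IsUnit (1 + a.comp b) := by
  set C := Ring.inverse (1 + b.comp a) with hC
  have h1 : (1 + b.comp a) * C = 1 := Ring.mul_inverse_cancel _ h
  have h2 : C * (1 + b.comp a) = 1 := Ring.inverse_mul_cancel _ h
  have h1' : ∀ y, C y + b (a (C y)) = y := by
    intro y
    have := DFunLike.congr_fun h1 y
    simpa [mul_def] using this
  have h2' : ∀ y, C (y + b (a y)) = y := by
    intro y
    have := DFunLike.congr_fun h2 y
    simpa [mul_def] using this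
  refine isUnit_iff_exists.mpr ⟨1 - a.comp (C.comp b), ?_, ?_⟩
  · ext x
    simp only [mul_def, comp_apply, ContinuousLinearMap.one_apply, sub_apply, add_apply, map_sub, map_add]
    have := congrArg a (h1' (b x))
    rw [map_add] at this
    rw [← sub_eq_zero]
    rw [← this]
    abel
  · ext x
    simp only [mul_def, comp_apply, ContinuousLinearMap.one_apply, sub_apply, add_apply, map_sub, map_add]
    have := congrArg a (h2' (b x))
    rw [map_add, map_add] at this
    nth_rewrite 1 [← this]
    abel

lemma aux_selfAdjoint_ring_inverse {T : E →L[ℂ] E} (h : IsSelfAdjoint T) :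
    IsSelfAdjoint (Ring.inverse T) := by
  have := Ring.inverse_star T
  rw [h.star_eq] at this
  exact this.symm

lemma aux_strictlyPos_inverse {T : E →L[ℂ] E} (hpos : T.IsPositive) (hu : IsUnit T) :
    (Ring.inverse T).IsPositive ∧ IsUnit (Ring.inverse T) := by
  have hu' : IsUnit (Ring.inverse T) :=
    isUnit_iff_exists.mpr ⟨T, Ring.inverse_mul_cancel _ hu, Ring.mul_inverse_cancel _ hu⟩
  have hsa : IsSelfAdjoint (Ring.inverse T) := aux_selfAdjoint_ring_inverse hpos.isSelfAdjoint
  refine ⟨isPositive_def'.mpr ⟨hsa, ?_⟩, hu'⟩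
  intro x
  have hx : T (Ring.inverse T x) = x := by
    have := DFunLike.congr_fun (Ring.mul_inverse_cancel T hu) x
    simpa [mul_def] using this
  have := hpos.re_inner_nonneg_left (Ring.inverse T x)
  rw [hx] at this
  rw [reApplyInnerSelf, inner_re_symm]
  simpa using this

end AuxLemmas

variable {H₁ H₂ 𝒵 : Type*}
  [NormedAddCommGroup H₁] [InnerProductSpace ℂ H₁] [CompleteSpace H₁]
  [NormedAddCommGroup H₂] [InnerProductSpace ℂ H₂] [CompleteSpace H₂]
  [NormedAddCommGroup 𝒵] [InnerProductSpace ℂ 𝒵] [CompleteSpace 𝒵]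

theorem strict_contraction_A_identities
    (W : H₁ →L[ℂ] 𝒵) (Wt : H₂ →L[ℂ] 𝒵)
    (P Λ : 𝒵 →L[ℂ] 𝒵) (A : H₂ →L[ℂ] H₁)
    (hP : P = W.comp (adjoint W))
    (hΛ : Λ = W.comp (adjoint W) - Wt.comp (adjoint Wt))
    (hA : A = (adjoint W).comp ((Ring.inverse P).comp Wt))
    (hpos : IsStrictlyPositiveOp Λ) :
    -- (i)
    IsStrictlyPositiveOp P ∧
    -- (ii)
    IsStrictlyPositiveOp (1 - (adjoint A).comp A) ∧
    -- (iii)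
    Ring.inverse (1 - (adjoint A).comp A) =
      1 + (adjoint Wt).comp ((Ring.inverse Λ).comp Wt) ∧
    -- (iv)
    A.comp ((Ring.inverse (1 - (adjoint A).comp A)).comp (adjoint A)) =
      (adjoint W).comp ((Ring.inverse Λ).comp W) -
        (adjoint W).comp ((Ring.inverse P).comp W) := by
  obtain ⟨hΛpos, hΛu⟩ := hpos
  have hΛΛ' : Λ * Ring.inverse Λ = 1 := Ring.mul_inverse_cancel _ hΛu
  have hΛ'Λ : Ring.inverse Λ * Λ = 1 := Ring.inverse_mul_cancel _ hΛu
  have hΛ'pos : (Ring.inverse Λ).IsPositive := (aux_strictlyPos_inverse hΛpos hΛu).1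
  have hTpos : ((adjoint Wt).comp ((Ring.inverse Λ).comp Wt)).IsPositive :=
    hΛ'pos.adjoint_conj Wt
  have hQu : IsUnit (1 + (adjoint Wt).comp ((Ring.inverse Λ).comp Wt)) :=
    aux_isUnit_one_add _ hTpos
  have hQpos : (1 + (adjoint Wt).comp ((Ring.inverse Λ).comp Wt)).IsPositive :=
    isPositive_one.add hTpos
  have hSu : IsUnit (1 + ((Ring.inverse Λ).comp Wt).comp (adjoint Wt)) :=
    aux_swap _ _ hQu
  have hWtWt : Wt.comp (adjoint Wt) = P - Λ := by rw [hΛ, hP]; abel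
  have hPfact : P = Λ * (1 + ((Ring.inverse Λ).comp Wt).comp (adjoint Wt)) := by
    have key : Λ.comp (((Ring.inverse Λ).comp Wt).comp (adjoint Wt))
        = Wt.comp (adjoint Wt) := by
      rw [← comp_assoc, ← comp_assoc]
      have : Λ.comp (Ring.inverse Λ) = 1 := hΛΛ'
      rw [this, one_def, id_comp]
    rw [mul_add, mul_one, mul_def, key, hWtWt]
    abel
  have hPu : IsUnit P := by rw [hPfact]; exact hΛu.mul hSu
  have hPpos : P.IsPositive := by
    rw [hP]
    exact isPositive_self_comp_adjoint W
  have hPP' : P * Ring.inverse P = 1 := Ring.mul_inverse_cancel _ hPu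
  have hP'P : Ring.inverse P * P = 1 := Ring.inverse_mul_cancel _ hPu
  -- pointwise facts
  have pW : ∀ x, W ((adjoint W) x) = P x := fun x => by rw [hP]; rfl
  have pWt : ∀ x, Wt ((adjoint Wt) x) = P x - Λ x := fun x => by
    have := DFunLike.congr_fun hWtWt x; simpa using this
  have pP1 : ∀ x, Ring.inverse P (P x) = x := fun x => by
    have := DFunLike.congr_fun hP'P x; simpa [mul_def] using this
  have pP2 : ∀ x, P (Ring.inverse P x) = x := fun x => by
    have := DFunLike.congr_fun hPP' x; simpa [mul_def] using this
  have pΛ1 : ∀ x, Ring.inverse Λ (Λ x) = x := fun x => by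
    have := DFunLike.congr_fun hΛ'Λ x; simpa [mul_def] using this
  have pΛ2 : ∀ x, Λ (Ring.inverse Λ x) = x := fun x => by
    have := DFunLike.congr_fun hΛΛ' x; simpa [mul_def] using this
  have hP'sa : adjoint (Ring.inverse P) = Ring.inverse P := by
    have := (aux_selfAdjoint_ring_inverse hPpos.isSelfAdjoint).star_eq
    rwa [star_eq_adjoint] at this
  have hAadj : adjoint A = (adjoint Wt).comp ((Ring.inverse P).comp W) := by
    rw [hA]
    simp [adjoint_comp, adjoint_adjoint, hP'sa, comp_assoc]
  have key1 : (1 - (adjoint A).comp A) *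
      (1 + (adjoint Wt).comp ((Ring.inverse Λ).comp Wt)) = 1 := by
    rw [hAadj, hA]
    ext x
    simp only [mul_def, comp_apply, ContinuousLinearMap.one_apply, sub_apply, add_apply, map_sub, map_add,
      pW, pWt, pP1, pP2, pΛ1, pΛ2]
    abel
  have key2 : (1 + (adjoint Wt).comp ((Ring.inverse Λ).comp Wt)) *
      (1 - (adjoint A).comp A) = 1 := by
    rw [hAadj, hA]
    ext x
    simp only [mul_def, comp_apply, ContinuousLinearMap.one_apply, sub_apply, add_apply, map_sub, map_add,
      pW, pWt, pP1, pP2, pΛ1, pΛ2]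
    abel
  have hIu : IsUnit (1 - (adjoint A).comp A) := isUnit_iff_exists.mpr ⟨_, key1, key2⟩
  have hiii : Ring.inverse (1 - (adjoint A).comp A) =
      1 + (adjoint Wt).comp ((Ring.inverse Λ).comp Wt) := aux_ring_inverse_eq key1 key2
  have h2pos : (1 - (adjoint A).comp A).IsPositive := by
    have := (aux_strictlyPos_inverse hQpos hQu).1
    rwa [aux_ring_inverse_eq key2 key1] at this
  refine ⟨⟨hPpos, hPu⟩, ⟨h2pos, hIu⟩, hiii, ?_⟩
  rw [hiii, hAadj, hA]
  ext x
  simp only [comp_apply, ContinuousLinearMap.one_apply, sub_apply, add_apply, map_sub, map_add,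
    pW, pWt, pP1, pP2, pΛ1, pΛ2]
  abel

end
end
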